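/- The comultiplication of the modular automorphism of the left integral is given by Δ(σ(a)) = (S² ⊗ σ)(Δ(a)), i.e. Δ(σ(a)) = Σ S²(a₍₁₎) ⊗ σ(a₍₂₎), for every a ∈ A. -/

import Mathlib

open TensorProduct HopfAlgebra

section Aux

variable {A : Type*} [Ring A] [HopfAlgebra ℂ A]

open Coalgebra

/-- Elementwise form of left invariance. -/
private lemma aux_inv (φ : A →ₗ[ℂ] ℂ)
    (hφL : ∀ a : A,
      (TensorProduct.rid ℂ A) (LinearMap.lTensor A φ (Coalgebra.comul a)) = φ a • (1 : A))
    {a : A} (r : Coalgebra.Repr ℂ a (A × A)) :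
    ∑ i ∈ r.index, φ (r.right i) • r.left i = φ a • (1 : A) := by
  have h := hφL a
  rw [← r.eq] at h
  simpa [map_sum] using h

/-- `∑ S(a₍₁₎) a₍₂₎ ⊗ a₍₃₎ = 1 ⊗ a`, with the grouping `(id ⊗ Δ) ∘ Δ`. -/
private lemma aux_three {a : A} (r : Coalgebra.Repr ℂ a (A × A))
    (s : ∀ j : A × A, Coalgebra.Repr ℂ (r.right j) (A × A)) :
    ∑ j ∈ r.index, ∑ k ∈ (s j).index,
        (antipode (R := ℂ) (r.left j) * (s j).left k) ⊗ₜ[ℂ] (s j).right k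
      = (1 : A) ⊗ₜ[ℂ] a := by
  classical
  have h := Coalgebra.sum_tmul_tmul_eq r (fun j => ℛ ℂ (r.left j)) s
  set M : A ⊗[ℂ] (A ⊗[ℂ] A) →ₗ[ℂ] A ⊗[ℂ] A :=
    (LinearMap.mul' ℂ A).rTensor A ∘ₗ
      ((TensorProduct.assoc ℂ A A A).symm : A ⊗[ℂ] (A ⊗[ℂ] A) ≃ₗ[ℂ] (A ⊗[ℂ] A) ⊗[ℂ] A).toLinearMap
        ∘ₗ LinearMap.rTensor (A ⊗[ℂ] A) (antipode (R := ℂ)) with hM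
  have hMt : ∀ x y z : A, M (x ⊗ₜ (y ⊗ₜ z)) = (antipode (R := ℂ) x * y) ⊗ₜ z := by
    intro x y z
    simp [hM, TensorProduct.assoc_symm_tmul, LinearMap.mul'_apply]
  have h2 := congrArg M h
  simp only [map_sum, hMt] at h2
  rw [← h2]
  have hcounit : ∑ j ∈ r.index, Coalgebra.counit (R := ℂ) (r.left j) • r.right j = a := by
    have h0 := congrArg (TensorProduct.lid ℂ A) (Coalgebra.sum_counit_tmul_eq r)
    rw [map_sum] at h0
    simp only [TensorProduct.lid_tmul, one_smul] at h0
    exact h0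
  calc
    ∑ j ∈ r.index, ∑ k ∈ (ℛ ℂ (r.left j)).index,
        (antipode (R := ℂ) ((ℛ ℂ (r.left j)).left k) * (ℛ ℂ (r.left j)).right k)
          ⊗ₜ[ℂ] r.right j
        = ∑ j ∈ r.index,
            (1 : A) ⊗ₜ[ℂ] (Coalgebra.counit (R := ℂ) (r.left j) • r.right j) := by
        refine Finset.sum_congr rfl fun j _ => ?_
        rw [← TensorProduct.sum_tmul, HopfAlgebra.sum_antipode_mul_eq_smul (ℛ ℂ (r.left j)),
          TensorProduct.smul_tmul, TensorProduct.tmul_smul]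
    _ = (1 : A) ⊗ₜ[ℂ] a := by rw [← TensorProduct.tmul_sum, hcounit]

/-- Strong left invariance (Lemma A):
`∑ b₍₁₎ φ(a b₍₂₎) = ∑ S(a₍₁₎) φ(a₍₂₎ b)`. -/
private lemma aux_A (φ : A →ₗ[ℂ] ℂ)
    (hφL : ∀ a : A,
      (TensorProduct.rid ℂ A) (LinearMap.lTensor A φ (Coalgebra.comul a)) = φ a • (1 : A))
    (a b : A) (ra : Coalgebra.Repr ℂ a (A × A)) (rb : Coalgebra.Repr ℂ b (A × A))
    (s : ∀ j : A × A, Coalgebra.Repr ℂ (ra.right j) (A × A)) :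
    ∑ i ∈ rb.index, φ (a * rb.right i) • rb.left i
      = ∑ j ∈ ra.index, φ (ra.right j * b) • antipode (R := ℂ) (ra.left j) := by
  classical
  -- step 1 : expand φ(x b) • 1 by invariance applied to x*b
  have step1 : ∀ j : A × A, φ (ra.right j * b) • (1 : A)
      = ∑ k ∈ (s j).index, ∑ i ∈ rb.index,
          φ ((s j).right k * rb.right i) • ((s j).left k * rb.left i) := by
    intro j
    have h := hφL (ra.right j * b)
    rw [Bialgebra.comul_mul, ← (s j).eq, ← rb.eq, Finset.sum_mul_sum] at h
    simp only [Algebra.TensorProduct.tmul_mul_tmul] at h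
    rw [← h]
    simp only [map_sum, LinearMap.lTensor_tmul, TensorProduct.rid_tmul]
  -- the auxiliary bilinear map H
  set H : A ⊗[ℂ] A →ₗ[ℂ] A :=
    TensorProduct.lift (LinearMap.mk₂ ℂ
      (fun x y => ∑ i ∈ rb.index, φ (y * rb.right i) • (x * rb.left i))
      (by intro x x' y; simp [add_mul, smul_add, Finset.sum_add_distrib])
      (by intro c x y
          rw [Finset.smul_sum]
          refine Finset.sum_congr rfl fun i _ => ?_
          rw [smul_mul_assoc]
          exact smul_comm _ _ _)
      (by intro x y y'; simp [add_mul, map_add, add_smul, Finset.sum_add_distrib])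
      (by intro c x y
          rw [Finset.smul_sum]
          refine Finset.sum_congr rfl fun i _ => ?_
          rw [smul_mul_assoc, map_smul, smul_eq_mul, mul_smul])) with hH
  have hHt : ∀ x y : A, H (x ⊗ₜ y) = ∑ i ∈ rb.index, φ (y * rb.right i) • (x * rb.left i) := by
    intro x y; simp [hH]
  have h3 := congrArg H (aux_three ra s)
  simp only [map_sum, hHt] at h3
  calc
    ∑ i ∈ rb.index, φ (a * rb.right i) • rb.left i
        = ∑ i ∈ rb.index, φ (a * rb.right i) • ((1 : A) * rb.left i) := by simp
    _ = ∑ j ∈ ra.index, ∑ k ∈ (s j).index, ∑ i ∈ rb.index,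
          φ ((s j).right k * rb.right i)
            • ((antipode (R := ℂ) (ra.left j) * (s j).left k) * rb.left i) := h3.symm
    _ = ∑ j ∈ ra.index, antipode (R := ℂ) (ra.left j) *
          (∑ k ∈ (s j).index, ∑ i ∈ rb.index,
            φ ((s j).right k * rb.right i) • ((s j).left k * rb.left i)) := by
        refine Finset.sum_congr rfl fun j _ => ?_
        rw [Finset.mul_sum]
        refine Finset.sum_congr rfl fun k _ => ?_
        rw [Finset.mul_sum]
        refine Finset.sum_congr rfl fun i _ => ?_
        rw [mul_smul_comm, mul_assoc]
    _ = ∑ j ∈ ra.index, antipode (R := ℂ) (ra.left j) * (φ (ra.right j * b) • (1 : A)) := by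
        refine Finset.sum_congr rfl fun j _ => ?_
        rw [step1 j]
    _ = ∑ j ∈ ra.index, φ (ra.right j * b) • antipode (R := ℂ) (ra.left j) := by
        refine Finset.sum_congr rfl fun j _ => ?_
        rw [mul_smul_comm, mul_one]

/-- The `S⁻¹`-version of Lemma A. -/
private lemma aux_A' (φ : A →ₗ[ℂ] ℂ)
    (hφL : ∀ a : A,
      (TensorProduct.rid ℂ A) (LinearMap.lTensor A φ (Coalgebra.comul a)) = φ a • (1 : A))
    (hSinj : Function.Injective (antipode (R := ℂ) (A := A)))
    (T : A →ₗ[ℂ] A) (hT : ∀ x : A, antipode (R := ℂ) (T x) = x)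
    (a b : A) (ra : Coalgebra.Repr ℂ a (A × A)) (rb : Coalgebra.Repr ℂ b (A × A))
    (s : ∀ j : A × A, Coalgebra.Repr ℂ (ra.right j) (A × A)) :
    ∑ j ∈ ra.index, φ (ra.right j * b) • ra.left j
      = ∑ i ∈ rb.index, φ (a * rb.right i) • T (rb.left i) := by
  apply hSinj
  rw [map_sum, map_sum]
  simp only [map_smul, hT]
  exact (aux_A φ hφL a b ra rb s).symm

/-- Separation lemma: if `(id ⊗ φ(b ⬝ —)) x = 0` for all `b`, then `x = 0`. -/
private lemma aux_sep (φ : A →ₗ[ℂ] ℂ)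
    (hφf2 : ∀ a : A, (∀ b : A, φ (b * a) = 0) → a = 0)
    (x : A ⊗[ℂ] A)
    (h : ∀ b : A,
      (TensorProduct.rid ℂ A)
        (LinearMap.lTensor A (φ ∘ₗ LinearMap.mulLeft ℂ b) x) = 0) : x = 0 := by
  classical
  set bA := Module.Basis.ofVectorSpace ℂ A with hbA
  set E : A ⊗[ℂ] A ≃ₗ[ℂ] (Module.Basis.ofVectorSpaceIndex ℂ A) →₀ A :=
    (TensorProduct.congr bA.repr (LinearEquiv.refl ℂ A)).trans
      (TensorProduct.finsuppScalarLeft ℂ A _) with hE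
  have key : ∀ (f : A →ₗ[ℂ] ℂ) (y : A ⊗[ℂ] A) (k : Module.Basis.ofVectorSpaceIndex ℂ A),
      f (E y k) = bA.repr ((TensorProduct.rid ℂ A) (LinearMap.lTensor A f y)) k := by
    intro f y k
    induction y using TensorProduct.induction_on with
    | zero => simp
    | tmul m n =>
        simp [hE, TensorProduct.congr_tmul, mul_comm]
    | add u v hu hv =>
        simp only [map_add, Finsupp.add_apply, hu, hv]
  have hEx : E x = 0 := by
    ext k
    refine hφf2 (E x k) fun b => ?_
    have hk := key (φ ∘ₗ LinearMap.mulLeft ℂ b) x k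
    rw [h b] at hk
    simpa using hk
  have h2 := congrArg E.symm hEx
  simpa using h2

end Aux

/-- The comultiplication of the modular automorphism of the left integral:
`Δ(σ(a)) = (S² ⊗ σ)(Δ(a))` for all `a ∈ A`. -/
theorem comul_modular_automorphism_left
    {A : Type*} [Ring A] [HopfAlgebra ℂ A]
    (hS : Function.Bijective (antipode (R := ℂ) (A := A)))
    (φ : A →ₗ[ℂ] ℂ) (hφ0 : φ ≠ 0)
    (hφL : ∀ a : A,
      (TensorProduct.rid ℂ A) (LinearMap.lTensor A φ (Coalgebra.comul a)) = φ a • (1 : A))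
    (hφf1 : ∀ a : A, (∀ b : A, φ (a * b) = 0) → a = 0)
    (hφf2 : ∀ a : A, (∀ b : A, φ (b * a) = 0) → a = 0)
    (σ : A ≃ₐ[ℂ] A) (hσ : ∀ a b : A, φ (a * b) = φ (b * σ a)) :
    ∀ a : A,
      Coalgebra.comul (R := ℂ) (σ a) =
        TensorProduct.map (antipode (R := ℂ) ∘ₗ antipode (R := ℂ)) σ.toLinearMap
          (Coalgebra.comul a) := by
  classical
  intro a
  -- inverse of the antipode
  set Se : A ≃ₗ[ℂ] A := LinearEquiv.ofBijective (antipode (R := ℂ)) hS with hSe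
  have hT : ∀ x : A, antipode (R := ℂ) (Se.symm x) = x := fun x => Se.apply_symm_apply x
  set ra := Coalgebra.Repr.arbitrary ℂ a with hra
  set rσ := Coalgebra.Repr.arbitrary ℂ (σ a) with hrσ
  set s : ∀ j : A × A, Coalgebra.Repr ℂ (ra.right j) (A × A) :=
    fun j => Coalgebra.Repr.arbitrary ℂ (ra.right j) with hs
  -- main pointwise identity
  have main : ∀ b : A,
      ∑ t ∈ rσ.index, φ (b * rσ.right t) • Se.symm.toLinearMap (rσ.left t)
        = ∑ j ∈ ra.index, φ (b * σ (ra.right j)) • antipode (R := ℂ) (ra.left j) := by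
    intro b
    set rb := Coalgebra.Repr.arbitrary ℂ b with hrb
    have h1 := aux_A φ hφL a b ra rb s
    have h2 := aux_A' φ hφL hS.injective Se.symm.toLinearMap hT b (σ a) rb rσ
      (fun i => Coalgebra.Repr.arbitrary ℂ (rb.right i))
    calc
      ∑ t ∈ rσ.index, φ (b * rσ.right t) • Se.symm.toLinearMap (rσ.left t)
          = ∑ i ∈ rb.index, φ (rb.right i * σ a) • rb.left i := h2.symm
      _ = ∑ i ∈ rb.index, φ (a * rb.right i) • rb.left i := by
          refine Finset.sum_congr rfl fun i _ => ?_
          rw [← hσ a (rb.right i)]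
      _ = ∑ j ∈ ra.index, φ (ra.right j * b) • antipode (R := ℂ) (ra.left j) := h1
      _ = ∑ j ∈ ra.index, φ (b * σ (ra.right j)) • antipode (R := ℂ) (ra.left j) := by
          refine Finset.sum_congr rfl fun j _ => ?_
          rw [hσ (ra.right j) b]
  -- now separate
  have hx : (∑ t ∈ rσ.index, Se.symm.toLinearMap (rσ.left t) ⊗ₜ[ℂ] rσ.right t)
      - (∑ j ∈ ra.index, antipode (R := ℂ) (ra.left j) ⊗ₜ[ℂ] σ (ra.right j)) = 0 := by
    refine aux_sep φ hφf2 _ fun b => ?_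
    rw [map_sub, map_sub]
    simp only [map_sum, LinearMap.lTensor_tmul, TensorProduct.rid_tmul, LinearMap.comp_apply,
      LinearMap.mulLeft_apply]
    rw [sub_eq_zero]
    exact main b
  rw [sub_eq_zero] at hx
  have hx2 := congrArg (LinearMap.rTensor A (antipode (R := ℂ))) hx
  simp only [map_sum, LinearMap.rTensor_tmul, LinearEquiv.coe_coe, hT] at hx2
  calc
    Coalgebra.comul (R := ℂ) (σ a) = ∑ t ∈ rσ.index, rσ.left t ⊗ₜ[ℂ] rσ.right t := rσ.eq.symm
    _ = ∑ j ∈ ra.index,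
          antipode (R := ℂ) (antipode (R := ℂ) (ra.left j)) ⊗ₜ[ℂ] σ (ra.right j) := hx2
    _ = TensorProduct.map (antipode (R := ℂ) ∘ₗ antipode (R := ℂ)) σ.toLinearMap
          (Coalgebra.comul a) := by
        rw [← ra.eq, map_sum]
        simp [TensorProduct.map_tmul]
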